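/- Fix integers d ≥ 1, H ≥ 1, a gradient threshold θ > 0, and a degree bound Δ ≥ 2. Let f : ℝ^d → ℝ be a real polynomial of degree at most Δ and x ∈ ℝ^d. Then there is a universal constant C such that the dual cost function η ↦ ℓ(η, x, f) on ℝ_{≥0} is piecewise constant with at most C·Δ^H pieces; that is, ℝ_{≥0} can be partitioned into at most C·Δ^H intervals on each of which η ↦ ℓ(η, x, f) is constant. -/

import Mathlib

set_option maxHeartbeats 2000000

open MvPolynomial Polynomial


/-- Gradient-descent iterates: `gdIter f x η i` is the `(i+1)`-st iterate `x_{i+1}`,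
so `gdIter f x η 0 = x₁ = x` and `x_{i+1} = x_i - η ∇f(x_i)`. -/
noncomputable def gdIter {d : ℕ} (f : EuclideanSpace ℝ (Fin d) → ℝ)
    (x : EuclideanSpace ℝ (Fin d)) (η : ℝ) : ℕ → EuclideanSpace ℝ (Fin d)
  | 0 => x
  | i + 1 => gdIter f x η i - η • gradient f (gdIter f x η i)

/-- Gradient-descent cost: the smallest `i ∈ {1,…,H}` with `‖∇f(x_i)‖ < θ` if it exists,
and `H` otherwise. -/
noncomputable def gdCost {d : ℕ} (H : ℕ) (θ : ℝ) (f : EuclideanSpace ℝ (Fin d) → ℝ)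
    (x : EuclideanSpace ℝ (Fin d)) (η : ℝ) : ℕ :=
  sInf ({i | 1 ≤ i ∧ i ≤ H ∧ ‖gradient f (gdIter f x η (i - 1))‖ < θ} ∪ {H})

/-- `f : ℝ^d → ℝ` is a real polynomial of (total) degree at most `Δ`. -/
def IsPolyDeg {d : ℕ} (Δ : ℕ) (f : EuclideanSpace ℝ (Fin d) → ℝ) : Prop :=
  ∃ P : MvPolynomial (Fin d) ℝ, P.totalDegree ≤ Δ ∧
    ∀ y : EuclideanSpace ℝ (Fin d), f y = MvPolynomial.eval (fun j => y j) P


/-! ### Auxiliary lemmas -/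

variable {d : ℕ}

noncomputable abbrev gdD (d : ℕ) (P : MvPolynomial (Fin d) ℝ)
    (y : EuclideanSpace ℝ (Fin d)) : EuclideanSpace ℝ (Fin d) →L[ℝ] ℝ :=
  ∑ j : Fin d, MvPolynomial.eval (fun i => y i) (pderiv j P) •
    EuclideanSpace.proj (𝕜 := ℝ) (ι := Fin d) j

lemma hasFDerivAt_mvpoly (P : MvPolynomial (Fin d) ℝ) (y : EuclideanSpace ℝ (Fin d)) :
    HasFDerivAt (fun z : EuclideanSpace ℝ (Fin d) => MvPolynomial.eval (fun j => z j) P)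
      (gdD d P y) y := by
  induction P using MvPolynomial.induction_on with
  | C a => simpa [gdD] using hasFDerivAt_const (MvPolynomial.eval (fun j => (y : Fin d → ℝ) j) (MvPolynomial.C a : MvPolynomial (Fin d) ℝ)) y
  | add p q hp hq =>
      have := hp.add hq
      refine (this.congr_fderiv ?_).congr_of_eventuallyEq (Filter.Eventually.of_forall fun z => ?_)
      · ext v; simp [gdD, mul_add, add_mul, Finset.sum_add_distrib, add_comm]
      · simp
  | mul_X p j hp =>
      have hXj : HasFDerivAt (fun z : EuclideanSpace ℝ (Fin d) => z j)
          (EuclideanSpace.proj (𝕜 := ℝ) (ι := Fin d) j) y := by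
        simpa using (EuclideanSpace.proj (𝕜 := ℝ) (ι := Fin d) j).hasFDerivAt
      have := hp.mul hXj
      refine (this.congr_fderiv ?_).congr_of_eventuallyEq (Filter.Eventually.of_forall fun z => ?_)
      · ext v
        simp only [gdD, pderiv_mul, pderiv_X]
        simp only [Pi.single_apply, gdD, pderiv_mul, pderiv_X, map_add, map_mul, MvPolynomial.eval_X]
        simp only [apply_ite, map_one, map_zero, mul_one, mul_zero, ContinuousLinearMap.add_apply,
          ContinuousLinearMap.smul_apply, ContinuousLinearMap.coe_sum', Finset.sum_apply,
          smul_eq_mul, PiLp.proj_apply]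
        have hcong : ∀ c ∈ (Finset.univ : Finset (Fin d)),
            (if j = c then MvPolynomial.eval (fun i => (y : Fin d → ℝ) i) (pderiv c p) * y j
                + MvPolynomial.eval (fun i => (y : Fin d → ℝ) i) p
              else MvPolynomial.eval (fun i => (y : Fin d → ℝ) i) (pderiv c p) * y j + 0) * v c
            = MvPolynomial.eval (fun i => (y : Fin d → ℝ) i) (pderiv c p) * y j * v c
              + (if j = c then MvPolynomial.eval (fun i => (y : Fin d → ℝ) i) p * v c else 0) :=
          fun c _ => by split_ifs with h <;> ring
        rw [Finset.sum_congr rfl hcong, Finset.sum_add_distrib, Finset.sum_ite_eq]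
        simp only [Finset.mem_univ, if_pos]
        rw [add_comm]
        congr 1
        rw [Finset.mul_sum]
        exact Finset.sum_congr rfl fun c _ => by ring
      · simp

lemma gradient_mvpoly (P : MvPolynomial (Fin d) ℝ) (y : EuclideanSpace ℝ (Fin d)) :
    gradient (fun z : EuclideanSpace ℝ (Fin d) => MvPolynomial.eval (fun j => z j) P) y
      = (WithLp.toLp 2 (fun j => MvPolynomial.eval (fun i => y i) (pderiv j P)) : EuclideanSpace ℝ (Fin d)) := by
  apply HasGradientAt.gradient
  rw [hasGradientAt_iff_hasFDerivAt]
  refine (hasFDerivAt_mvpoly P y).congr_fderiv ?_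
  ext v
  simp [InnerProductSpace.toDual_apply_apply, PiLp.inner_apply, RCLike.inner_apply, gdD, mul_comm]

lemma eval_aeval' (P : MvPolynomial (Fin d) ℝ) (A : Fin d → Polynomial ℝ) (t : ℝ) :
    (MvPolynomial.aeval A P).eval t = MvPolynomial.eval (fun j => (A j).eval t) P := by
  induction P using MvPolynomial.induction_on with
  | C a => simp
  | add p q hp hq => simp [hp, hq]
  | mul_X p j hp => simp [hp]

lemma natDegree_aeval_le (P : MvPolynomial (Fin d) ℝ) (A : Fin d → Polynomial ℝ) (D : ℕ)
    (hA : ∀ j, (A j).natDegree ≤ D) :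
    (MvPolynomial.aeval A P).natDegree ≤ P.totalDegree * D := by
  rw [MvPolynomial.aeval_def, MvPolynomial.eval₂_eq]
  apply Polynomial.natDegree_sum_le_of_forall_le
  intro m hm
  calc (Polynomial.C (MvPolynomial.coeff m P) * ∏ i ∈ m.support, A i ^ m i).natDegree
      ≤ (∏ i ∈ m.support, A i ^ m i).natDegree := Polynomial.natDegree_C_mul_le _ _
    _ ≤ ∑ i ∈ m.support, (A i ^ m i).natDegree := Polynomial.natDegree_prod_le _ _
    _ ≤ ∑ i ∈ m.support, m i * D := by
        refine Finset.sum_le_sum fun i _ => Polynomial.natDegree_pow_le.trans ?_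
        exact Nat.mul_le_mul_left _ (hA i)
    _ = (∑ i ∈ m.support, m i) * D := by rw [Finset.sum_mul]
    _ ≤ P.totalDegree * D := Nat.mul_le_mul_right _ (MvPolynomial.le_totalDegree hm)

lemma totalDegree_pderiv_le' (P : MvPolynomial (Fin d) ℝ) (j : Fin d) :
    (MvPolynomial.pderiv j P).totalDegree ≤ P.totalDegree := by
  conv_lhs => rw [P.as_sum]
  rw [map_sum]
  apply MvPolynomial.totalDegree_finsetSum_le
  intro m hm
  rw [MvPolynomial.pderiv_monomial]
  refine (MvPolynomial.totalDegree_monomial_le _ _).trans ?_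
  refine le_trans ?_ (MvPolynomial.le_totalDegree hm)
  rw [Finsupp.sum_fintype _ _ (fun _ => rfl), Finsupp.sum_fintype _ _ (fun _ => rfl)]
  exact Finset.sum_le_sum fun i _ => tsub_le_self

/-- Coordinates of gradient-descent iterates as polynomials in the step size. -/
noncomputable def gdPoly (d : ℕ) (P : MvPolynomial (Fin d) ℝ)
    (x : EuclideanSpace ℝ (Fin d)) : ℕ → Fin d → Polynomial ℝ
  | 0 => fun j => Polynomial.C (x j)
  | i + 1 => fun j => gdPoly d P x i j
      - Polynomial.X * (MvPolynomial.aeval (gdPoly d P x i) (MvPolynomial.pderiv j P))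

lemma gdIter_eval (P : MvPolynomial (Fin d) ℝ) (x : EuclideanSpace ℝ (Fin d)) (η : ℝ) :
    ∀ i, gdIter (fun z : EuclideanSpace ℝ (Fin d) => MvPolynomial.eval (fun j => z j) P) x η i
      = (WithLp.toLp 2 (fun j => (gdPoly d P x i j).eval η) : EuclideanSpace ℝ (Fin d))
  | 0 => by
      ext j
      simp [gdIter, gdPoly]
  | i + 1 => by
      have IH := gdIter_eval P x η i
      show gdIter _ x η i - η • gradient _ (gdIter _ x η i) = _
      rw [IH, gradient_mvpoly]
      ext j
      simp only [PiLp.sub_apply, PiLp.smul_apply, smul_eq_mul]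
      show (gdPoly d P x i j).eval η
          - η * MvPolynomial.eval (fun i' => (gdPoly d P x i i').eval η) (pderiv j P)
        = (gdPoly d P x (i + 1) j).eval η
      rw [show gdPoly d P x (i + 1) j = gdPoly d P x i j
        - Polynomial.X * (MvPolynomial.aeval (gdPoly d P x i) (MvPolynomial.pderiv j P)) from rfl]
      rw [Polynomial.eval_sub, Polynomial.eval_mul, Polynomial.eval_X, eval_aeval']

/-- The degree recursion. -/
def gdDeg (Δ : ℕ) : ℕ → ℕ
  | 0 => 0
  | i + 1 => Δ * gdDeg Δ i + 1

lemma gdPoly_natDegree_le (P : MvPolynomial (Fin d) ℝ) (x : EuclideanSpace ℝ (Fin d))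
    (Δ : ℕ) (hP : P.totalDegree ≤ Δ) (hΔ1 : 1 ≤ Δ) :
    ∀ i j, (gdPoly d P x i j).natDegree ≤ gdDeg Δ i
  | 0, j => by simp [gdPoly, gdDeg]
  | i + 1, j => by
      have IH := fun j' => gdPoly_natDegree_le P x Δ hP hΔ1 i j'
      have hb : (MvPolynomial.aeval (gdPoly d P x i) (MvPolynomial.pderiv j P)).natDegree
          ≤ Δ * gdDeg Δ i := by
        refine (natDegree_aeval_le _ _ (gdDeg Δ i) IH).trans ?_
        exact Nat.mul_le_mul_right _ ((totalDegree_pderiv_le' P j).trans hP)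
      show (gdPoly d P x i j - Polynomial.X * _).natDegree ≤ gdDeg Δ (i + 1)
      refine (Polynomial.natDegree_sub_le _ _).trans ?_
      refine max_le ((IH j).trans ?_) ?_
      · show gdDeg Δ i ≤ Δ * gdDeg Δ i + 1
        have := Nat.le_mul_of_pos_left (gdDeg Δ i) hΔ1
        omega
      · have h := Polynomial.natDegree_mul_le
          (p := (Polynomial.X : Polynomial ℝ))
          (q := MvPolynomial.aeval (gdPoly d P x i) (MvPolynomial.pderiv j P))
        rw [Polynomial.natDegree_X] at h
        show (Polynomial.X * _).natDegree ≤ Δ * gdDeg Δ i + 1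
        omega

/-- For a polynomial objective of degree at most `Δ`, the dual cost function
`η ↦ ℓ(η, x, f)` on `ℝ_{≥0}` is piecewise constant with at most `C·Δ^H` interval pieces,
for a universal constant `C`. -/
theorem gd_poly_dual_cost_piecewise_constant :
    ∃ C : ℝ, 0 < C ∧
      ∀ (d H Δ : ℕ), 1 ≤ d → 1 ≤ H → 2 ≤ Δ →
      ∀ θ : ℝ, 0 < θ →
      ∀ (f : EuclideanSpace ℝ (Fin d) → ℝ), IsPolyDeg Δ f →
      ∀ x : EuclideanSpace ℝ (Fin d),
        ∃ n : ℕ, (n : ℝ) ≤ C * (Δ : ℝ) ^ H ∧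
          ∃ S : Fin n → Set ℝ,
            (∀ k, (S k).OrdConnected) ∧
            (⋃ k, S k) = Set.Ici (0 : ℝ) ∧
            (∀ k l, k ≠ l → Disjoint (S k) (S l)) ∧
            (∀ k, ∃ c : ℕ, ∀ η ∈ S k, gdCost H θ f x η = c) := by
  classical
  refine ⟨9, by norm_num, ?_⟩
  intro d H Δ hd hH hΔ θ hθ f hpoly x
  obtain ⟨P, hPdeg, hfP⟩ := hpoly
  have hf : f = fun z : EuclideanSpace ℝ (Fin d) => MvPolynomial.eval (fun j => z j) P :=
    funext hfP
  subst hf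
  set F := fun z : EuclideanSpace ℝ (Fin d) => MvPolynomial.eval (fun j => z j) P with hF
  -- the polynomials whose signs determine the cost
  set p : ℕ → Polynomial ℝ := fun i =>
    ∑ j : Fin d, (MvPolynomial.aeval (gdPoly d P x i) (MvPolynomial.pderiv j P)) ^ 2 with hp
  set q : ℕ → Polynomial ℝ := fun i => p i - Polynomial.C (θ ^ 2) with hq
  -- norm of the gradient along the trajectory
  have hnorm : ∀ η i, ‖gradient F (gdIter F x η i)‖ ^ 2 = (p i).eval η := by
    intro η i
    rw [gdIter_eval P x η i, gradient_mvpoly]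
    rw [EuclideanSpace.norm_eq, Real.sq_sqrt (Finset.sum_nonneg fun j _ => by positivity)]
    simp only [hp, Polynomial.eval_finset_sum, Polynomial.eval_pow]
    refine Finset.sum_congr rfl fun j _ => ?_
    rw [eval_aeval']
    simp [sq_abs]
  -- predicate equivalence
  have hpred : ∀ η i, (‖gradient F (gdIter F x η i)‖ < θ ↔ (q i).eval η < 0) := by
    intro η i
    have h1 : ‖gradient F (gdIter F x η i)‖ < θ ↔
        ‖gradient F (gdIter F x η i)‖ ^ 2 < θ ^ 2 := by
      constructor
      · intro h; exact pow_lt_pow_left₀ h (norm_nonneg _) (by norm_num)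
      · intro h; exact lt_of_pow_lt_pow_left₀ 2 hθ.le h
    rw [h1, hnorm]
    simp only [hq, Polynomial.eval_sub, Polynomial.eval_C]
    constructor <;> intro h <;> linarith
  -- degree bounds
  have hqdeg : ∀ i, (q i).natDegree ≤ 2 * (Δ * gdDeg Δ i) := by
    intro i
    refine (Polynomial.natDegree_sub_le _ _).trans (max_le ?_ ?_)
    · refine Polynomial.natDegree_sum_le_of_forall_le _ _ fun j _ => ?_
      refine Polynomial.natDegree_pow_le.trans ?_
      refine Nat.mul_le_mul_left _ ?_
      refine (natDegree_aeval_le _ _ (gdDeg Δ i)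
        (fun j' => gdPoly_natDegree_le P x Δ hPdeg (by omega) i j')).trans ?_
      exact Nat.mul_le_mul_right _ ((totalDegree_pderiv_le' P j).trans hPdeg)
    · simp
  -- root set
  set Z : Finset ℝ := (Finset.range H).biUnion (fun i => (q i).roots.toFinset) with hZ
  set N : ℕ := Z.card with hN
  -- counting/indexing functions
  set cnt : ℝ → ℕ := fun η => (Z.filter (fun z => z < η)).card with hcnt
  set idx : ℝ → ℕ := fun η => 2 * cnt η + (if η ∈ Z then 1 else 0) with hidx
  have hcnt_le : ∀ η, cnt η ≤ N := fun η => Finset.card_le_card (Finset.filter_subset _ _)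
  have hcnt_mono : ∀ a b, a ≤ b → cnt a ≤ cnt b := by
    intro a b hab
    refine Finset.card_le_card fun z hz => ?_
    rw [Finset.mem_filter] at hz ⊢
    exact ⟨hz.1, lt_of_lt_of_le hz.2 hab⟩
  have hstep : ∀ a b, a < b → a ∈ Z → cnt a + 1 ≤ cnt b := by
    intro a b hab haZ
    have hsub : insert a (Z.filter (fun z => z < a)) ⊆ Z.filter (fun z => z < b) := by
      intro z hz
      rcases Finset.mem_insert.1 hz with rfl | hz
      · exact Finset.mem_filter.2 ⟨haZ, hab⟩
      · rw [Finset.mem_filter] at hz ⊢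
        exact ⟨hz.1, hz.2.trans hab⟩
    have hnm : a ∉ Z.filter (fun z => z < a) := by
      simp [Finset.mem_filter]
    calc cnt a + 1 = (insert a (Z.filter (fun z => z < a))).card := by
          rw [Finset.card_insert_of_notMem hnm]
      _ ≤ cnt b := Finset.card_le_card hsub
  have hmono : ∀ a b, a ≤ b → idx a ≤ idx b := by
    intro a b hab
    rcases eq_or_lt_of_le hab with rfl | hab'
    · exact le_rfl
    by_cases haZ : a ∈ Z
    · have h1 := hstep a b hab' haZ
      simp only [hidx]
      split_ifs <;> omega
    · have h1 := hcnt_mono a b hab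
      simp only [hidx]
      split_ifs <;> omega
  have hsep : ∀ a b ζ, idx a = idx b → a ≤ ζ → ζ ≤ b → ζ ∈ Z → a = b := by
    intro a b ζ heq haζ hζb hζZ
    by_contra hne
    have hab : a < b := lt_of_le_of_ne (haζ.trans hζb) hne
    rcases eq_or_lt_of_le hζb with rfl | hζb'
    · -- ζ = b ∈ Z
      by_cases haZ : a ∈ Z
      · have h2 := hstep a ζ hab haZ
        simp only [hidx, if_pos haZ, if_pos hζZ] at heq
        omega
      · simp only [hidx, if_neg haZ, if_pos hζZ] at heq
        omega
    · have h1 := hstep ζ b hζb' hζZ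
      have h2 : idx a ≤ idx ζ := hmono a ζ haζ
      have h2' : idx ζ = 2 * cnt ζ + 1 := by simp only [hidx, if_pos hζZ]
      have h3 : 2 * cnt b ≤ idx b := by simp only [hidx]; split_ifs <;> omega
      omega
  -- piece bound
  have hDg : ∀ i, gdDeg Δ i + 1 ≤ Δ ^ i := by
    intro i
    induction i with
    | zero => simp [gdDeg]
    | succ i ih =>
        have : Δ * (gdDeg Δ i + 1) ≤ Δ * Δ ^ i := Nat.mul_le_mul_left _ ih
        show Δ * gdDeg Δ i + 1 + 1 ≤ Δ ^ (i + 1)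
        rw [pow_succ]
        nlinarith [Nat.zero_le (gdDeg Δ i)]
  have hgeom : ∀ m, ∑ i ∈ Finset.range m, Δ ^ (i + 1) ≤ 2 * Δ ^ m := by
    intro m
    induction m with
    | zero => simp
    | succ m ih =>
        rw [Finset.sum_range_succ, pow_succ]
        have h2 : 2 * Δ ^ m ≤ Δ ^ m * Δ := by
          calc 2 * Δ ^ m ≤ Δ * Δ ^ m := Nat.mul_le_mul_right _ hΔ
            _ = Δ ^ m * Δ := Nat.mul_comm _ _
        omega
  have hNbound : N ≤ 4 * Δ ^ H := by
    have h1 : N ≤ ∑ i ∈ Finset.range H, (q i).natDegree := by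
      refine (Finset.card_biUnion_le).trans (Finset.sum_le_sum fun i _ => ?_)
      exact (Multiset.toFinset_card_le _).trans (Polynomial.card_roots' _)
    have h2 : ∑ i ∈ Finset.range H, (q i).natDegree ≤ ∑ i ∈ Finset.range H, 2 * Δ ^ (i + 1) := by
      refine Finset.sum_le_sum fun i _ => (hqdeg i).trans ?_
      have := hDg i
      have : Δ * gdDeg Δ i ≤ Δ * Δ ^ i := Nat.mul_le_mul_left _ (by omega)
      have hcomm : Δ * Δ ^ i = Δ ^ i * Δ := Nat.mul_comm _ _
      rw [pow_succ]
      omega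
    have h3 : ∑ i ∈ Finset.range H, 2 * Δ ^ (i + 1) ≤ 4 * Δ ^ H := by
      rw [← Finset.mul_sum]
      have := hgeom H
      omega
    omega
  refine ⟨2 * N + 1, ?_, ?_⟩
  · have hn : 2 * N + 1 ≤ 9 * Δ ^ H := by
      have h1 : 1 ≤ Δ ^ H := Nat.one_le_pow _ _ (by omega)
      omega
    calc ((2 * N + 1 : ℕ) : ℝ) ≤ ((9 * Δ ^ H : ℕ) : ℝ) := by exact_mod_cast hn
      _ = 9 * (Δ : ℝ) ^ H := by push_cast; ring
  · refine ⟨fun k => {η | 0 ≤ η ∧ idx η = (k : ℕ)}, ?_, ?_, ?_, ?_⟩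
    · intro k
      constructor
      intro a ha b hb c hc
      refine ⟨ha.1.trans hc.1, le_antisymm ?_ ?_⟩
      · rw [← hb.2]; exact hmono c b hc.2
      · rw [← ha.2]; exact hmono a c hc.1
    · ext η
      simp only [Set.mem_iUnion, Set.mem_Ici, Set.mem_setOf_eq]
      constructor
      · rintro ⟨k, h0, _⟩; exact h0
      · intro hη
        have hlt : idx η < 2 * N + 1 := by
          by_cases hηZ : η ∈ Z
          · have h1 : cnt η + 1 ≤ N := by
              have hsub : insert η (Z.filter (fun z => z < η)) ⊆ Z := by
                intro z hz
                rcases Finset.mem_insert.1 hz with rfl | hz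
                · exact hηZ
                · exact (Finset.mem_filter.1 hz).1
              have hnm : η ∉ Z.filter (fun z => z < η) := by simp [Finset.mem_filter]
              calc cnt η + 1 = (insert η (Z.filter (fun z => z < η))).card := by
                    rw [Finset.card_insert_of_notMem hnm]
                _ ≤ N := Finset.card_le_card hsub
            simp only [hidx, if_pos hηZ]
            omega
          · have := hcnt_le η
            simp only [hidx, if_neg hηZ]
            omega
        exact ⟨⟨idx η, hlt⟩, hη, rfl⟩
    · intro k l hkl
      rw [Set.disjoint_left]
      intro η h1 h2
      exact hkl (Fin.val_injective (h1.2 ▸ h2.2))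
    · intro k
      by_cases hne : ∃ η, η ∈ {η : ℝ | 0 ≤ η ∧ idx η = (k : ℕ)}
      · obtain ⟨η0, hη0⟩ := hne
        refine ⟨gdCost H θ F x η0, ?_⟩
        intro η hη
        -- sign constancy on the piece
        have hsign : ∀ i < H, ((q i).eval η < 0 ↔ (q i).eval η0 < 0) := by
          have key : ∀ a b, (0 ≤ a ∧ idx a = (k : ℕ)) → (0 ≤ b ∧ idx b = (k : ℕ)) →
              ∀ i < H, (q i).eval a < 0 → (q i).eval b < 0 := by
            intro a b ha hb i hiH hqa
            by_contra hqb
            push_neg at hqb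
            have hqne : q i ≠ 0 := fun h => by rw [h] at hqa; simp at hqa
            have hab : a ≠ b := fun h => by rw [h] at hqa; linarith
            have hidxab : idx a = idx b := ha.2.trans hb.2.symm
            have hcont : ContinuousOn (fun t => (q i).eval t) (Set.uIcc a b) :=
              (Polynomial.continuous (q i)).continuousOn
            rcases lt_or_gt_of_ne hab with h | h
            · have := intermediate_value_Icc h.le
                ((Polynomial.continuous (q i)).continuousOn)
              have h0 : (0 : ℝ) ∈ Set.Icc ((q i).eval a) ((q i).eval b) := ⟨hqa.le, hqb⟩
              obtain ⟨ζ, hζmem, hζ0⟩ := this h0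
              have hζZ : ζ ∈ Z := Finset.mem_biUnion.2 ⟨i, Finset.mem_range.2 hiH,
                Multiset.mem_toFinset.2 ((Polynomial.mem_roots hqne).2 hζ0)⟩
              exact hab (hsep a b ζ hidxab hζmem.1 hζmem.2 hζZ)
            · have := intermediate_value_Icc' h.le
                ((Polynomial.continuous (q i)).continuousOn)
              have h0 : (0 : ℝ) ∈ Set.Icc ((q i).eval a) ((q i).eval b) := ⟨hqa.le, hqb⟩
              obtain ⟨ζ, hζmem, hζ0⟩ := this h0
              have hζZ : ζ ∈ Z := Finset.mem_biUnion.2 ⟨i, Finset.mem_range.2 hiH,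
                Multiset.mem_toFinset.2 ((Polynomial.mem_roots hqne).2 hζ0)⟩
              exact hab.symm (hsep b a ζ hidxab.symm hζmem.1 hζmem.2 hζZ)
          intro i hiH
          exact ⟨fun h => key η η0 hη hη0 i hiH h, fun h => key η0 η hη0 hη i hiH h⟩
        -- conclude equality of costs
        unfold gdCost
        congr 1
        ext i
        simp only [Set.mem_union, Set.mem_setOf_eq, Set.mem_singleton_iff]
        constructor
        · rintro (⟨h1, h2, h3⟩ | h3)
          · refine Or.inl ⟨h1, h2, ?_⟩
            rw [hpred] at h3 ⊢
            exact (hsign (i - 1) (by omega)).1 h3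
          · exact Or.inr h3
        · rintro (⟨h1, h2, h3⟩ | h3)
          · refine Or.inl ⟨h1, h2, ?_⟩
            rw [hpred] at h3 ⊢
            exact (hsign (i - 1) (by omega)).2 h3
          · exact Or.inr h3
      · exact ⟨0, fun η hη => absurd ⟨η, hη⟩ hne⟩
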